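/- Let u : ℝ → ℂ be differentiable and let φ : ℝ → ℝ be three times differentiable with φ'(s) ≠ 0 for all s. Define ũ(s) = u(φ(s))·φ'(s) + (1/2)·φ''(s)/φ'(s), and set v = u² − u', ṽ = ũ² − ũ'. Then for all s ∈ ℝ, ṽ(s) = v(φ(s))·φ'(s)² − (1/2)·S(φ)(s). That is, the Miura transformation u ↦ u² − u' intertwines the transformation law of connections on Ω^{−1/2} with the transformation law of projective connections. -/

import Mathlib

/-- The Schwarzian derivative `S(φ) = φ'''/φ' − (3/2)(φ''/φ')²`. -/
noncomputable def schwarzian (φ : ℝ → ℝ) : ℝ → ℝ := fun s =>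
  deriv (deriv (deriv φ)) s / deriv φ s -
    (3 / 2) * (deriv (deriv φ) s / deriv φ s) ^ 2

lemma miura_alg (a b c U U' : ℂ) (ha : a ≠ 0) :
    (U * a + (1 / 2) * (b / a)) ^ 2 -
      (U' * a * a + U * b + (1 / 2) * ((c * a - b * b) / a ^ 2)) =
    (U ^ 2 - U') * a ^ 2 - (1 / 2) * (c / a - 3 / 2 * (b / a) ^ 2) := by
  have h : a ^ 3 * a⁻¹ ^ 3 = 1 := by
    rw [← mul_pow, mul_inv_cancel₀ ha, one_pow]
  field_simp
  ring

/-- The Miura transformation `u ↦ v = u² − u'` intertwines the transformation law of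
connections on `Ω^{−1/2}` with that of projective connections: if
`ũ(s) = u(φ(s))·φ'(s) + (1/2)·φ''(s)/φ'(s)`, then
`ṽ(s) = v(φ(s))·φ'(s)² − (1/2)·S(φ)(s)`. -/
theorem stmt_2 (u : ℝ → ℂ) (φ : ℝ → ℝ)
    (hu : Differentiable ℝ u)
    (hφ : Differentiable ℝ φ) (hφ' : Differentiable ℝ (deriv φ))
    (hφ'' : Differentiable ℝ (deriv (deriv φ)))
    (hφne : ∀ s : ℝ, deriv φ s ≠ 0)
    (ut v vt : ℝ → ℂ)
    (hut : ut = fun s => u (φ s) * Complex.ofReal (deriv φ s) +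
      (1 / 2) * (Complex.ofReal (deriv (deriv φ) s) / Complex.ofReal (deriv φ s)))
    (hv : v = fun t => u t ^ 2 - deriv u t)
    (hvt : vt = fun s => ut s ^ 2 - deriv ut s) :
    ∀ s : ℝ, vt s = v (φ s) * Complex.ofReal (deriv φ s) ^ 2 -
      (1 / 2) * Complex.ofReal (schwarzian φ s) := by
  intro s
  have hne : (Complex.ofReal (deriv φ s)) ≠ 0 := by
    exact_mod_cast Complex.ofReal_ne_zero.mpr (hφne s)
  -- building blocks
  have hA : HasDerivAt (fun t => u (φ t))
      ((deriv u (φ s)) * Complex.ofReal (deriv φ s)) s := by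
    have := ((hu (φ s)).hasDerivAt).scomp s ((hφ s).hasDerivAt)
    simpa [Complex.real_smul, mul_comm, Function.comp_def] using this
  have hB : HasDerivAt (fun t => Complex.ofReal (deriv φ t))
      (Complex.ofReal (deriv (deriv φ) s)) s :=
    HasDerivAt.ofReal_comp ((hφ' s).hasDerivAt)
  have hC : HasDerivAt (fun t => Complex.ofReal (deriv (deriv φ) t))
      (Complex.ofReal (deriv (deriv (deriv φ)) s)) s :=
    HasDerivAt.ofReal_comp ((hφ'' s).hasDerivAt)
  have hQ : HasDerivAt (fun t => Complex.ofReal (deriv (deriv φ) t) /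
        Complex.ofReal (deriv φ t))
      ((Complex.ofReal (deriv (deriv (deriv φ)) s) * Complex.ofReal (deriv φ s) -
        Complex.ofReal (deriv (deriv φ) s) * Complex.ofReal (deriv (deriv φ) s)) /
        (Complex.ofReal (deriv φ s)) ^ 2) s := hC.div hB hne
  have hUT : HasDerivAt ut
      ((deriv u (φ s)) * Complex.ofReal (deriv φ s) * Complex.ofReal (deriv φ s) +
        u (φ s) * Complex.ofReal (deriv (deriv φ) s) +
        (1 / 2) * ((Complex.ofReal (deriv (deriv (deriv φ)) s) * Complex.ofReal (deriv φ s) -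
          Complex.ofReal (deriv (deriv φ) s) * Complex.ofReal (deriv (deriv φ) s)) /
          (Complex.ofReal (deriv φ s)) ^ 2)) s := by
    rw [hut]
    exact (hA.mul hB).add (hQ.const_mul (1 / 2))
  have hd : deriv ut s = _ := hUT.deriv
  rw [hvt]
  simp only []
  rw [hd]
  simp only [hut, hv, schwarzian]
  push_cast
  exact miura_alg _ _ _ _ _ hne
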